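/- An extended-real-valued function f : X → ℝ ∪ {+∞} is quasiconvex if and only if the adjusted sublevel set S^a_f(x) is convex for every x ∈ X. -/
import Mathlib


open Metric Classical

variable {X : Type*} [NormedAddCommGroup X] [NormedSpace ℝ X] [CompleteSpace X]

/-- The adjusted sublevel set `S^a_f(x)`. -/
noncomputable def adjSublevel (f : X → EReal) (x : X) : Set X :=
  if ∀ z : X, f x ≤ f z then {y | f y ≤ f x}
  else {y | f y ≤ f x} ∩
    {y | infDist y {z | f z < f x} ≤ infDist x {z | f z < f x}}

/-- Sublevel sets at arbitrary (non-`⊥`) `EReal` levels are convex, given convexity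
of all real-level sublevel sets. -/
lemma convex_sublevel_of_real (f : X → EReal) (hf : ∀ y, f y ≠ ⊥)
    (hl : ∀ l : ℝ, Convex ℝ {y | f y ≤ (l : EReal)}) (c : EReal) (hc : c ≠ ⊥) :
    Convex ℝ {y | f y ≤ c} := by
  rcases eq_or_ne c ⊤ with h | h
  · simp only [h, le_top, Set.setOf_true]
    exact convex_univ
  · have := hl c.toReal
    rwa [EReal.coe_toReal h hc] at this

/-- Strict sublevel sets are convex, given convexity of all real-level sublevel sets. -/
lemma convex_strict_sublevel (f : X → EReal) (hf : ∀ y, f y ≠ ⊥)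
    (hl : ∀ l : ℝ, Convex ℝ {y | f y ≤ (l : EReal)}) (c : EReal) :
    Convex ℝ {z | f z < c} := by
  intro z1 h1 z2 h2 a b ha hb hab
  have hm : max (f z1) (f z2) < c := max_lt h1 h2
  obtain ⟨q, hq1, hq2⟩ := EReal.exists_between_coe_real hm
  have hz1 : z1 ∈ {y | f y ≤ (q : EReal)} := le_of_lt (lt_of_le_of_lt (le_max_left _ _) hq1)
  have hz2 : z2 ∈ {y | f y ≤ (q : EReal)} := le_of_lt (lt_of_le_of_lt (le_max_right _ _) hq1)
  have := hl q hz1 hz2 ha hb hab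
  exact lt_of_le_of_lt this hq2

/-- An extended-real-valued function `f` is quasiconvex (all sublevel sets `S_λ`,
`λ ∈ ℝ`, are convex) if and only if the adjusted sublevel set `S^a_f(x)` is convex
for every `x ∈ X`. -/
theorem quasiconvex_iff_adjSublevel_convex
    (f : X → EReal) (hf : ∀ y, f y ≠ ⊥) :
    (∀ l : ℝ, Convex ℝ {y | f y ≤ (l : EReal)}) ↔
      ∀ x : X, Convex ℝ (adjSublevel f x) := by
  constructor
  · intro hl x
    unfold adjSublevel
    split_ifs with hmin
    · exact convex_sublevel_of_real f hf hl (f x) (hf x)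
    · refine Convex.inter (convex_sublevel_of_real f hf hl (f x) (hf x)) ?_
      push_neg at hmin
      obtain ⟨w, hw⟩ := hmin
      set S : Set X := {z | f z < f x} with hS
      have hSconv : Convex ℝ S := convex_strict_sublevel f hf hl (f x)
      have hSne : S.Nonempty := ⟨w, hw⟩
      have hρ : 0 ≤ infDist x S := infDist_nonneg
      have hset : {y | infDist y S ≤ infDist x S} = cthickening (infDist x S) S := by
        ext y
        rw [mem_cthickening_iff, Set.mem_setOf_eq, infDist,
          ← ENNReal.le_ofReal_iff_toReal_le (infEdist_ne_top hSne) hρ]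
      rw [hset]
      exact hSconv.cthickening _
  · intro hconv l
    have key : ∀ y1 y2 : X, ∀ a b : ℝ, 0 ≤ a → 0 ≤ b → a + b = 1 →
        f y1 ≤ f y2 →
        infDist y1 {z | f z < f y2} ≤ infDist y2 {z | f z < f y2} →
        f (a • y1 + b • y2) ≤ f y2 := by
      intro y1 y2 a b ha hb hab h1 h2
      have hc := hconv y2
      unfold adjSublevel at hc
      split_ifs at hc with hmin
      · exact hc h1 (le_refl (f y2)) ha hb hab
      · have m1 : y1 ∈ {y | f y ≤ f y2} ∩
            {y | infDist y {z | f z < f y2} ≤ infDist y2 {z | f z < f y2}} := ⟨h1, h2⟩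
        have m2 : y2 ∈ {y | f y ≤ f y2} ∩
            {y | infDist y {z | f z < f y2} ≤ infDist y2 {z | f z < f y2}} :=
          ⟨le_refl (f y2), le_refl (infDist y2 {z | f z < f y2})⟩
        exact (hc m1 m2 ha hb hab).1
    have key2 : ∀ y1 y2 : X, ∀ a b : ℝ, 0 ≤ a → 0 ≤ b → a + b = 1 →
        f y1 ≤ f y2 → f (a • y1 + b • y2) ≤ f y2 := by
      intro y1 y2 a b ha hb hab h
      rcases h.eq_or_lt with heq | hlt
      · rcases le_total (infDist y1 {z | f z < f y2}) (infDist y2 {z | f z < f y2}) with hd | hd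
        · exact key y1 y2 a b ha hb hab h hd
        · have hset : {z | f z < f y1} = {z | f z < f y2} := by rw [heq]
          have h' : f y2 ≤ f y1 := le_of_eq heq.symm
          have := key y2 y1 b a hb ha (by linarith) h' (by rw [hset]; exact hd)
          rw [add_comm] at this
          exact le_trans this (le_of_eq heq)
      · have h0 : infDist y1 {z | f z < f y2} = 0 := infDist_zero_of_mem hlt
        exact key y1 y2 a b ha hb hab h (by rw [h0]; exact infDist_nonneg)
    intro x1 hx1 x2 hx2 a b ha hb hab
    rcases le_total (f x1) (f x2) with h | h
    · exact le_trans (key2 x1 x2 a b ha hb hab h) hx2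
    · have := key2 x2 x1 b a hb ha (by linarith) h
      rw [add_comm] at this
      exact le_trans this hx1
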